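/- Price's theorem (one-dimensional case): if ℓ : R → R is twice differentiable with ℓ, ℓ', ℓ'' of at most polynomial growth, and q = N(m, σ²), then ∂/∂(σ²) E_{θ∼q}[ℓ(θ)] = ½ E_{θ∼q}[ℓ''(θ)]. -/

import Mathlib

open Real MeasureTheory

/-- `f` has at most polynomial growth. -/
def PolyGrowth (f : ℝ → ℝ) : Prop :=
  ∃ C : ℝ, ∃ n : ℕ, ∀ x : ℝ, |f x| ≤ C * (1 + |x|) ^ n

/-- Gaussian density with mean `m` and variance `v`. -/
noncomputable def gaussPDFVar (m v x : ℝ) : ℝ :=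
  (1 / Real.sqrt (2 * Real.pi * v)) * Real.exp (-(x - m) ^ 2 / (2 * v))

open Filter Set

lemma integrable_abs_pow_gauss {b : ℝ} (hb : 0 < b) (k : ℕ) :
    Integrable (fun x : ℝ => |x| ^ k * Real.exp (-b * x ^ 2)) := by
  have hk : (-1 : ℝ) < (k : ℝ) := lt_of_lt_of_le neg_one_lt_zero (Nat.cast_nonneg k)
  have h := (integrable_rpow_mul_exp_neg_mul_sq hb (s := (k : ℝ)) hk).abs
  have he : (fun x : ℝ => |x| ^ k * Real.exp (-b * x ^ 2))
      = fun x : ℝ => |x ^ ((k : ℝ) : ℝ) * Real.exp (-b * x ^ 2)| := by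
    funext x
    rw [Real.rpow_natCast, abs_mul, abs_pow, abs_of_pos (Real.exp_pos _)]
  rw [he]; exact h

lemma integrable_one_add_abs_pow_gauss {b : ℝ} (hb : 0 < b) (n : ℕ) :
    Integrable (fun x : ℝ => (1 + |x|) ^ n * Real.exp (-b * x ^ 2)) := by
  have hg : Integrable (fun x : ℝ =>
      (2:ℝ)^n * (Real.exp (-b*x^2) + |x|^n * Real.exp (-b*x^2))) :=
    ((integrable_exp_neg_mul_sq hb).add (integrable_abs_pow_gauss hb n)).const_mul _
  refine Integrable.mono' hg (Continuous.aestronglyMeasurable (by fun_prop))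
    (ae_of_all _ fun x => ?_)
  have hE : 0 < Real.exp (-b*x^2) := Real.exp_pos _
  have h0 : (0:ℝ) ≤ |x| := abs_nonneg x
  rw [Real.norm_eq_abs, abs_of_nonneg (by positivity)]
  have key : (1 + |x|) ^ n ≤ (2:ℝ)^n * (1 + |x|^n) := by
    rcases le_total |x| 1 with h | h
    · have h1 : (1 + |x|) ^ n ≤ (2:ℝ)^n := by
        apply pow_le_pow_left₀ (by positivity) (by linarith)
      nlinarith [pow_nonneg h0 n, pow_pos (show (0:ℝ)<2 by norm_num) n]
    · have h1 : (1 + |x|) ^ n ≤ (2*|x|)^n := by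
        apply pow_le_pow_left₀ (by positivity) (by linarith)
      rw [mul_pow] at h1
      nlinarith [pow_pos (show (0:ℝ)<2 by norm_num) n]
  nlinarith [pow_nonneg h0 n, pow_pos (show (0:ℝ)<2 by norm_num) n]

lemma integrable_one_add_abs_pow_gauss' {b : ℝ} (hb : 0 < b) (n : ℕ) (c : ℝ) :
    Integrable (fun x : ℝ => (1 + |x|) ^ n * Real.exp (-b * (x - c) ^ 2)) := by
  have h0 := (integrable_one_add_abs_pow_gauss hb n).comp_sub_right c
  have hg : Integrable (fun x : ℝ =>
      (1+|c|)^n * ((1 + |x - c|) ^ n * Real.exp (-b * (x - c) ^ 2))) := h0.const_mul _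
  refine Integrable.mono' hg (Continuous.aestronglyMeasurable (by fun_prop))
    (ae_of_all _ fun x => ?_)
  have hE : (0:ℝ) < Real.exp (-b*(x-c)^2) := Real.exp_pos _
  rw [Real.norm_eq_abs, abs_of_nonneg (by positivity)]
  have h1 : (1 + |x|) ≤ (1+|c|) * (1 + |x - c|) := by
    have h2 : |x| ≤ |x - c| + |c| := by
      have := abs_add_le (x - c) c; simpa using this
    nlinarith [abs_nonneg c, abs_nonneg (x - c)]
  have h2 : (1 + |x|)^n ≤ ((1+|c|) * (1 + |x - c|))^n :=
    pow_le_pow_left₀ (by positivity) h1 n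
  rw [mul_pow] at h2
  nlinarith [pow_nonneg (abs_nonneg (x-c)) n, pow_pos (show (0:ℝ) < 1+|c| by positivity) n,
    pow_nonneg (show (0:ℝ) ≤ 1 + |x-c| by positivity) n]

lemma integrable_of_le_poly_gauss {f : ℝ → ℝ} (hfm : AEStronglyMeasurable f volume)
    {C b c : ℝ} {n : ℕ} (hb : 0 < b)
    (h : ∀ x, |f x| ≤ C * ((1 + |x|) ^ n * Real.exp (-b * (x - c) ^ 2))) : Integrable f :=
  ((integrable_one_add_abs_pow_gauss' hb n c).const_mul C).mono' hfm
    (ae_of_all _ fun x => by simpa [Real.norm_eq_abs] using h x)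

lemma integrable_polyGrowth_mul {f g : ℝ → ℝ} (hfm : AEStronglyMeasurable f volume)
    (hf : ∃ C : ℝ, ∃ n : ℕ, ∀ x : ℝ, |f x| ≤ C * (1 + |x|) ^ n)
    (hgm : AEStronglyMeasurable g volume) {D b c : ℝ} {k : ℕ} (hb : 0 < b)
    (hg : ∀ x, |g x| ≤ D * ((1 + |x|) ^ k * Real.exp (-b * (x - c) ^ 2))) :
    Integrable (fun x => f x * g x) := by
  obtain ⟨C, n, hC⟩ := hf
  have hC0 : 0 ≤ C := by
    have h0 := (abs_nonneg (f 0)).trans (hC 0)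
    simpa using h0
  apply integrable_of_le_poly_gauss (f := fun x => f x * g x) (hfm.mul hgm) hb
    (C := C * D) (n := n + k) (c := c)
  intro x
  calc |f x * g x| = |f x| * |g x| := abs_mul _ _
    _ ≤ (C * (1+|x|)^n) * (D * ((1 + |x|) ^ k * Real.exp (-b * (x - c) ^ 2))) :=
        mul_le_mul (hC x) (hg x) (abs_nonneg _) (by positivity)
    _ = C * D * ((1 + |x|) ^ (n+k) * Real.exp (-b * (x - c) ^ 2)) := by rw [pow_add]; ring

lemma gaussPDFVar_pos (m : ℝ) {v : ℝ} (hv : 0 < v) (x : ℝ) : 0 < gaussPDFVar m v x := by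
  unfold gaussPDFVar
  have : 0 < Real.sqrt (2 * Real.pi * v) := Real.sqrt_pos.mpr (by positivity)
  positivity

lemma hasDerivAt_gauss_x (m : ℝ) {v : ℝ} (hv : 0 < v) (x : ℝ) :
    HasDerivAt (fun x => gaussPDFVar m v x) (gaussPDFVar m v x * (-(x - m) / v)) x := by
  have h1 : HasDerivAt (fun x : ℝ => -(x - m)^2 / (2*v)) (-(x-m)/v) x := by
    have h := (((hasDerivAt_id x).sub_const m).pow 2).neg.div_const (2*v)
    refine h.congr_deriv (Eq.symm ?_)
    simp only [id_eq]
    field_simp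
    ring
  have h2 := h1.exp.const_mul (1 / Real.sqrt (2 * Real.pi * v))
  refine h2.congr_deriv (Eq.symm ?_)
  unfold gaussPDFVar
  ring

lemma hasDerivAt_gauss_xx (m : ℝ) {v : ℝ} (hv : 0 < v) (x : ℝ) :
    HasDerivAt (fun x => gaussPDFVar m v x * (-(x - m) / v))
      (gaussPDFVar m v x * (((x - m)/v)^2 - 1/v)) x := by
  have h1 : HasDerivAt (fun x : ℝ => -(x - m)/v) (-1/v) x := by
    have h := ((hasDerivAt_id x).sub_const m).neg.div_const v
    exact h
  have h2 := (hasDerivAt_gauss_x m hv x).mul h1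
  refine h2.congr_deriv (Eq.symm ?_)
  field_simp
  ring

lemma hasDerivAt_gauss_v (m x : ℝ) {w : ℝ} (hw : 0 < w) :
    HasDerivAt (fun w => gaussPDFVar m w x)
      (gaussPDFVar m w x * ((x - m)^2/(2*w^2) - 1/(2*w))) w := by
  have hπ : (0:ℝ) < 2 * Real.pi * w := by positivity
  have hs : (0:ℝ) < Real.sqrt (2 * Real.pi * w) := Real.sqrt_pos.mpr hπ
  have h1 : HasDerivAt (fun w : ℝ => Real.sqrt (2 * Real.pi * w))
      (2 * Real.pi * (1 / (2 * Real.sqrt (2 * Real.pi * w)))) w := by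
    have hc : HasDerivAt (fun w : ℝ => 2 * Real.pi * w) (2 * Real.pi) w := by
      simpa using (hasDerivAt_id w).const_mul (2 * Real.pi)
    have h := (Real.hasDerivAt_sqrt (ne_of_gt hπ)).comp w hc
    refine h.congr_deriv (Eq.symm ?_)
    ring
  have h2 := h1.inv (ne_of_gt hs)
  have h3 : HasDerivAt (fun w : ℝ => -(x - m)^2 / (2*w)) ((x-m)^2/(2*w^2)) w := by
    have hc : HasDerivAt (fun w : ℝ => 2 * w) 2 w := by
      simpa using (hasDerivAt_id w).const_mul (2:ℝ)
    have h := (hc.inv (by positivity)).const_mul (-(x - m)^2)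
    have hfun : (fun w : ℝ => -(x - m)^2 / (2*w)) = fun w : ℝ => -(x - m)^2 * (2*w)⁻¹ := by
      funext w; rw [div_eq_mul_inv]
    rw [hfun]
    refine h.congr_deriv (Eq.symm ?_)
    field_simp
  have h4 := h2.mul h3.exp
  have hfun : (fun w : ℝ => gaussPDFVar m w x)
      = fun w : ℝ => (Real.sqrt (2 * Real.pi * w))⁻¹ * Real.exp (-(x - m)^2 / (2*w)) := by
    funext w; unfold gaussPDFVar; rw [one_div]
  rw [hfun]
  refine h4.congr_deriv (Eq.symm ?_)
  simp only [Pi.inv_apply]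
  unfold gaussPDFVar
  rw [one_div]
  set s := Real.sqrt (2 * Real.pi * w) with hsdef
  have hsq : s ^ 2 = 2 * Real.pi * w := Real.sq_sqrt (le_of_lt hπ)
  have hs0 : s ≠ 0 := ne_of_gt hs
  have hw0 : w ≠ 0 := ne_of_gt hw
  have hπ0 : Real.pi ≠ 0 := ne_of_gt Real.pi_pos
  field_simp
  linear_combination (-w) * hsq

set_option maxHeartbeats 1000000 in
/-- Price's theorem (1D): if `ℓ` is twice differentiable with `ℓ, ℓ', ℓ''` of at most
polynomial growth and `q = N(m, σ²)`, then
`∂/∂(σ²) E_{θ∼q}[ℓ(θ)] = ½ E_{θ∼q}[ℓ''(θ)]`. -/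
theorem stmt2 (ℓ : ℝ → ℝ) (hℓ : Differentiable ℝ ℓ) (hℓ' : Differentiable ℝ (deriv ℓ))
    (hg : PolyGrowth ℓ) (hg' : PolyGrowth (deriv ℓ)) (hg'' : PolyGrowth (deriv (deriv ℓ)))
    (m v : ℝ) (hv : 0 < v) :
    HasDerivAt (fun v' : ℝ => ∫ θ : ℝ, ℓ θ * gaussPDFVar m v' θ)
      ((1 / 2) * ∫ θ : ℝ, deriv (deriv ℓ) θ * gaussPDFVar m v θ) v := by
  have hπ := Real.pi_pos
  have hv0 : v ≠ 0 := ne_of_gt hv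
  have hm_ℓ : AEStronglyMeasurable ℓ volume := hℓ.continuous.aestronglyMeasurable
  have hm_ℓ' : AEStronglyMeasurable (deriv ℓ) volume := hℓ'.continuous.aestronglyMeasurable
  have hm_ℓ'' : AEStronglyMeasurable (deriv (deriv ℓ)) volume :=
    (measurable_deriv _).aestronglyMeasurable
  have hcont_g : ∀ w : ℝ, Continuous (fun x => gaussPDFVar m w x) := by
    intro w; unfold gaussPDFVar; fun_prop
  -- shorthand functions
  set G : ℝ → ℝ := fun x => gaussPDFVar m v x with hGdef
  set Gx : ℝ → ℝ := fun x => gaussPDFVar m v x * (-(x - m) / v) with hGxdef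
  set Gxx : ℝ → ℝ := fun x => gaussPDFVar m v x * (((x - m)/v)^2 - 1/v) with hGxxdef
  have hb2 : (0:ℝ) < 1/(2*v) := by positivity
  have hb3 : (0:ℝ) < 1/(3*v) := by positivity
  have hs2 : (0:ℝ) < Real.sqrt (2 * Real.pi * v) := Real.sqrt_pos.mpr (by positivity)
  have hGeq : ∀ x, G x = (1 / Real.sqrt (2 * Real.pi * v))
      * Real.exp (-(1/(2*v)) * (x - m)^2) := by
    intro x
    show gaussPDFVar m v x = _
    unfold gaussPDFVar
    rw [show -(x - m)^2/(2*v) = -(1/(2*v)) * (x - m)^2 by ring]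
  have hGpos : ∀ x, 0 < G x := fun x => gaussPDFVar_pos m hv x
  have hxm : ∀ x : ℝ, |x - m| ≤ (1 + |m|) * (1 + |x|) := by
    intro x
    have h2 : |x - m| ≤ |x| + |m| := abs_sub x m
    nlinarith [abs_nonneg x, abs_nonneg m]
  have hxm2 : ∀ x : ℝ, (x - m)^2 ≤ (1 + |m|)^2 * (1 + |x|)^2 := by
    intro x
    have := hxm x
    have h0 : |x - m|^2 = (x - m)^2 := sq_abs _
    nlinarith [abs_nonneg (x - m), abs_nonneg x, abs_nonneg m]
  have honeabs : ∀ x : ℝ, (1:ℝ) ≤ (1 + |x|)^2 := by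
    intro x
    nlinarith [abs_nonneg x]
  -- bounds on G, Gx, Gxx
  have hGbound : ∀ x, |G x| ≤ (1 / Real.sqrt (2 * Real.pi * v))
      * ((1 + |x|)^0 * Real.exp (-(1/(2*v)) * (x - m)^2)) := by
    intro x
    rw [abs_of_pos (hGpos x), hGeq x, pow_zero, one_mul]
  have hGxbound : ∀ x, |Gx x| ≤ ((1 + |m|)/v / Real.sqrt (2 * Real.pi * v))
      * ((1 + |x|)^1 * Real.exp (-(1/(2*v)) * (x - m)^2)) := by
    intro x
    rw [hGxdef]
    simp only []
    rw [abs_mul, abs_of_pos (hGpos x), hGeq x]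
    have hE : 0 < Real.exp (-(1/(2*v)) * (x - m)^2) := Real.exp_pos _
    have h1 : |(-(x - m) / v)| = |x - m| / v := by
      rw [abs_div, abs_neg, abs_of_pos hv]
    rw [h1, pow_one]
    have h2 := hxm x
    rw [div_div]
    rw [show (1 + |m|) / (v * Real.sqrt (2 * Real.pi * v)) *
        ((1 + |x|) * Real.exp (-(1/(2*v)) * (x - m)^2)) =
        (1 / Real.sqrt (2 * Real.pi * v) * Real.exp (-(1/(2*v)) * (x - m)^2)) *
        (((1 + |m|) * (1 + |x|)) / v) by field_simp]
    apply mul_le_mul_of_nonneg_left _ (by positivity)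
    exact div_le_div_of_nonneg_right h2 hv.le
  have hGxxbound : ∀ x, |Gxx x| ≤ (((1 + |m|)^2/v^2 + 1/v) / Real.sqrt (2 * Real.pi * v))
      * ((1 + |x|)^2 * Real.exp (-(1/(2*v)) * (x - m)^2)) := by
    intro x
    rw [hGxxdef]
    simp only []
    rw [abs_mul, abs_of_pos (hGpos x), hGeq x]
    have hE : 0 < Real.exp (-(1/(2*v)) * (x - m)^2) := Real.exp_pos _
    have h1 : |((x - m)/v)^2 - 1/v| ≤ ((1 + |m|)^2/v^2 + 1/v) * (1 + |x|)^2 := by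
      have h2 : |((x - m)/v)^2 - 1/v| ≤ ((x - m)/v)^2 + 1/v := by
        have := abs_sub (((x - m)/v)^2) (1/v)
        calc |((x - m)/v)^2 - 1/v| ≤ |((x - m)/v)^2| + |1/v| := abs_sub _ _
          _ = ((x - m)/v)^2 + 1/v := by
              rw [abs_of_nonneg (sq_nonneg _), abs_of_pos (by positivity)]
      have h3 : ((x - m)/v)^2 = (x - m)^2 / v^2 := by rw [div_pow]
      have h4 := hxm2 x
      have h5 := honeabs x
      have hvv : (0:ℝ) < v^2 := by positivity
      rw [h3] at h2
      have h6 : (x - m)^2 / v^2 ≤ ((1 + |m|)^2 * (1 + |x|)^2) / v^2 :=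
        div_le_div_of_nonneg_right h4 hvv.le
      rw [h3]
      calc |(x - m)^2/v^2 - 1/v| ≤ (x - m)^2 / v^2 + 1/v := h2
        _ ≤ ((1 + |m|)^2 * (1 + |x|)^2) / v^2 + 1/v * (1 + |x|)^2 :=
            add_le_add h6 (le_mul_of_one_le_right (by positivity) (honeabs x))
        _ = ((1 + |m|)^2/v^2 + 1/v) * (1 + |x|)^2 := by ring
    calc (1 / Real.sqrt (2 * Real.pi * v) * Real.exp (-(1/(2*v)) * (x - m)^2))
          * |((x - m)/v)^2 - 1/v|
        ≤ (1 / Real.sqrt (2 * Real.pi * v) * Real.exp (-(1/(2*v)) * (x - m)^2))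
          * (((1 + |m|)^2/v^2 + 1/v) * (1 + |x|)^2) :=
          mul_le_mul_of_nonneg_left h1 (by positivity)
      _ = (((1 + |m|)^2/v^2 + 1/v) / Real.sqrt (2 * Real.pi * v))
          * ((1 + |x|)^2 * Real.exp (-(1/(2*v)) * (x - m)^2)) := by ring
  -- integrability facts
  have I_ℓG : Integrable (fun x => ℓ x * G x) :=
    integrable_polyGrowth_mul hm_ℓ hg ((hcont_g v).aestronglyMeasurable) hb2 hGbound
  have I_ℓGx : Integrable (fun x => ℓ x * Gx x) :=
    integrable_polyGrowth_mul hm_ℓ hg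
      (((hcont_g v).mul (by fun_prop)).aestronglyMeasurable) hb2 hGxbound
  have I_ℓGxx : Integrable (fun x => ℓ x * Gxx x) :=
    integrable_polyGrowth_mul hm_ℓ hg
      (((hcont_g v).mul (by fun_prop)).aestronglyMeasurable) hb2 hGxxbound
  have I_ℓ'G : Integrable (fun x => deriv ℓ x * G x) :=
    integrable_polyGrowth_mul hm_ℓ' hg' ((hcont_g v).aestronglyMeasurable) hb2 hGbound
  have I_ℓ'Gx : Integrable (fun x => deriv ℓ x * Gx x) :=
    integrable_polyGrowth_mul hm_ℓ' hg'
      (((hcont_g v).mul (by fun_prop)).aestronglyMeasurable) hb2 hGxbound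
  have I_ℓ''G : Integrable (fun x => deriv (deriv ℓ) x * G x) :=
    integrable_polyGrowth_mul hm_ℓ'' hg'' ((hcont_g v).aestronglyMeasurable) hb2 hGbound
  -- step 1: differentiation under the integral sign
  obtain ⟨C, n, hC⟩ := hg
  have hC0 : 0 ≤ C := by have h0 := (abs_nonneg (ℓ 0)).trans (hC 0); simpa using h0
  set K : ℝ := C * ((1 / Real.sqrt (Real.pi * v)) * (2*(1 + |m|)^2/v^2 + 1/v)) with hKdef
  set bound : ℝ → ℝ :=
    fun θ => K * ((1 + |θ|)^(n+2) * Real.exp (-(1/(3*v)) * (θ - m)^2)) with hbdef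
  set F' : ℝ → ℝ → ℝ :=
    fun w θ => ℓ θ * (gaussPDFVar m w θ * ((θ - m)^2/(2*w^2) - 1/(2*w))) with hF'def
  have hsπv : (0:ℝ) < Real.sqrt (Real.pi * v) := Real.sqrt_pos.mpr (by positivity)
  have key := hasDerivAt_integral_of_dominated_loc_of_deriv_le (μ := volume)
    (F := fun w θ => ℓ θ * gaussPDFVar m w θ) (F' := F') (x₀ := v)
    (bound := bound) (Metric.ball_mem_nhds v (half_pos hv))
    (Filter.Eventually.of_forall fun w => hm_ℓ.mul (hcont_g w).aestronglyMeasurable)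
    I_ℓG
    (hm_ℓ.mul (((hcont_g v).mul (by fun_prop)).aestronglyMeasurable))
    (ae_of_all _ ?hbnd) ?hbint (ae_of_all _ ?hdiff)
  case hbnd =>
    intro θ w hw
    rw [Metric.mem_ball, Real.dist_eq, abs_lt] at hw
    have hw1 : v/2 < w := by linarith [hw.1]
    have hw2 : w < 3*v/2 := by linarith [hw.2]
    have hwpos : 0 < w := by linarith
    have hgw : 0 < gaussPDFVar m w θ := gaussPDFVar_pos m hwpos θ
    have hE3 : 0 < Real.exp (-(1/(3*v)) * (θ - m)^2) := Real.exp_pos _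
    have h1 : gaussPDFVar m w θ
        ≤ (1 / Real.sqrt (Real.pi * v)) * Real.exp (-(1/(3*v)) * (θ - m)^2) := by
      unfold gaussPDFVar
      have ha : Real.sqrt (Real.pi * v) ≤ Real.sqrt (2 * Real.pi * w) :=
        Real.sqrt_le_sqrt (by nlinarith)
      have hfac1 : 1 / Real.sqrt (2 * Real.pi * w) ≤ 1 / Real.sqrt (Real.pi * v) :=
        one_div_le_one_div_of_le hsπv ha
      have hfac2 : Real.exp (-(θ - m)^2/(2*w)) ≤ Real.exp (-(1/(3*v)) * (θ - m)^2) := by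
        apply Real.exp_le_exp.mpr
        rw [show -(θ - m)^2/(2*w) = -((θ - m)^2/(2*w)) by ring,
          show -(1/(3*v)) * (θ - m)^2 = -((θ - m)^2/(3*v)) by ring, neg_le_neg_iff]
        exact div_le_div_of_nonneg_left (sq_nonneg _) (by positivity) (by linarith)
      exact mul_le_mul hfac1 hfac2 (Real.exp_pos _).le (by positivity)
    have h2 : |(θ - m)^2/(2*w^2) - 1/(2*w)|
        ≤ (2*(1 + |m|)^2/v^2 + 1/v) * (1 + |θ|)^2 := by
      have e1 : (θ - m)^2/(2*w^2) ≤ (θ - m)^2/(v^2/2) :=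
        div_le_div_of_nonneg_left (sq_nonneg _) (by positivity) (by nlinarith)
      have e2 : 1/(2*w) ≤ 1/v := one_div_le_one_div_of_le hv (by linarith)
      have e3 : (θ - m)^2/(v^2/2) = 2*(θ - m)^2/v^2 := by ring
      have e4 : 2*(θ - m)^2/v^2 ≤ 2*(1 + |m|)^2*(1 + |θ|)^2/v^2 :=
        div_le_div_of_nonneg_right (by nlinarith [hxm2 θ]) (by positivity)
      calc |(θ - m)^2/(2*w^2) - 1/(2*w)|
          ≤ |(θ - m)^2/(2*w^2)| + |1/(2*w)| := abs_sub _ _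
        _ = (θ - m)^2/(2*w^2) + 1/(2*w) := by
            rw [abs_of_nonneg (by positivity), abs_of_nonneg (by positivity)]
        _ ≤ 2*(1 + |m|)^2*(1 + |θ|)^2/v^2 + 1/v * (1 + |θ|)^2 := by
            have e5 : 1/(2*w) ≤ 1/v * (1 + |θ|)^2 :=
              e2.trans (le_mul_of_one_le_right (by positivity) (honeabs θ))
            have e6 := e1.trans (e3.le.trans e4)
            exact add_le_add e6 e5
        _ = (2*(1 + |m|)^2/v^2 + 1/v) * (1 + |θ|)^2 := by ring
    have hnorm : ‖F' w θ‖ = |ℓ θ| * (gaussPDFVar m w θ * |(θ - m)^2/(2*w^2) - 1/(2*w)|) := by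
      rw [hF'def]
      simp only []
      rw [Real.norm_eq_abs, abs_mul, abs_mul, abs_of_pos hgw]
    rw [hnorm]
    calc |ℓ θ| * (gaussPDFVar m w θ * |(θ - m)^2/(2*w^2) - 1/(2*w)|)
        ≤ (C * (1 + |θ|)^n) * (((1 / Real.sqrt (Real.pi * v))
            * Real.exp (-(1/(3*v)) * (θ - m)^2)) * ((2*(1 + |m|)^2/v^2 + 1/v) * (1 + |θ|)^2)) :=
          mul_le_mul (hC θ) (mul_le_mul h1 h2 (abs_nonneg _) (by positivity))
            (by positivity) (by positivity)
      _ = bound θ := by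
          rw [hbdef, hKdef]
          simp only []
          rw [pow_add]
          ring
  case hbint =>
    rw [hbdef]
    exact (integrable_one_add_abs_pow_gauss' hb3 (n+2) m).const_mul K
  case hdiff =>
    intro θ w hw
    rw [Metric.mem_ball, Real.dist_eq, abs_lt] at hw
    have hwpos : 0 < w := by linarith [hw.1]
    exact (hasDerivAt_gauss_v m θ hwpos).const_mul (ℓ θ)
  -- step 2: rewrite the derivative value via integration by parts
  have hIBP1 : ∫ θ, ℓ θ * Gxx θ = - ∫ θ, deriv ℓ θ * Gx θ :=
    integral_mul_deriv_eq_deriv_mul_of_integrable (fun x _ => (hℓ x).hasDerivAt)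
      (fun x _ => hasDerivAt_gauss_xx m hv x) I_ℓGxx I_ℓ'Gx I_ℓGx
  have hIBP2 : ∫ θ, deriv ℓ θ * Gx θ = - ∫ θ, deriv (deriv ℓ) θ * G θ :=
    integral_mul_deriv_eq_deriv_mul_of_integrable (fun x _ => (hℓ' x).hasDerivAt)
      (fun x _ => hasDerivAt_gauss_x m hv x) I_ℓ'Gx I_ℓ''G I_ℓ'G
  have hval : ∫ θ, F' v θ = (1/2) * ∫ θ, deriv (deriv ℓ) θ * G θ := by
    have hfact : ∀ θ : ℝ, (θ - m)^2/(2*v^2) - 1/(2*v) = (1/2)*(((θ - m)/v)^2 - 1/v) := by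
      intro θ
      rw [div_pow]
      field_simp
    have hA : ∀ θ, F' v θ = (1/2) * (ℓ θ * Gxx θ) := by
      intro θ
      show ℓ θ * (gaussPDFVar m v θ * ((θ - m)^2/(2*v^2) - 1/(2*v)))
          = (1/2) * (ℓ θ * (gaussPDFVar m v θ * (((θ - m)/v)^2 - 1/v)))
      rw [hfact θ]
      ring
    calc ∫ θ, F' v θ = ∫ θ, (1/2) * (ℓ θ * Gxx θ) := integral_congr_ae (ae_of_all _ hA)
      _ = (1/2) * ∫ θ, ℓ θ * Gxx θ := integral_const_mul _ _
      _ = (1/2) * ∫ θ, deriv (deriv ℓ) θ * G θ := by rw [hIBP1, hIBP2]; ring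
  have hfinal := key.2
  rw [hval] at hfinal
  exact hfinal
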